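/- arXiv:0911.3719 — 2 statements merged into one kernel-verified Lean document; each statement's English description precedes it below -/
import Mathlib

section
/- For any Hopf algebra H, the generic base algebra B_H is a left coideal subalgebra of S(t_H)_Θ, i.e., Δ(B_H) ⊆ S(t_H)_Θ ⊗ B_H. -/
open TensorProduct

noncomputable section

variable (k : Type) [Field k]

/-- Convolution product of two linear maps from a coalgebra to an algebra. -/
def conv {C A : Type} [AddCommGroup C] [Module k C] [Coalgebra k C]
    [Ring A] [Algebra k A] (f g : C →ₗ[k] A) : C →ₗ[k] A :=
  LinearMap.mul' k A ∘ₗ TensorProduct.map f g ∘ₗ Coalgebra.comul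

/-- Unit of the convolution algebra: `unit ∘ counit`. -/
def convOne {C A : Type} [AddCommGroup C] [Module k C] [Coalgebra k C]
    [Ring A] [Algebra k A] : C →ₗ[k] A :=
  Algebra.linearMap k A ∘ₗ Coalgebra.counit

section CocycleDefs

variable {H : Type} [Ring H] [HopfAlgebra k H]

/-- The two-cocycle condition `β(x₁,y₁) β(x₂y₂,z) = β(y₁,z₁) β(x,y₂z₂)` for an `A`-valued
bilinear form `β` on `H`, as an equality of linear maps on `(H ⊗ H) ⊗ H`. -/
def IsCocycle {A : Type} [CommRing A] [Algebra k A] (β : H ⊗[k] H →ₗ[k] A) : Prop :=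
  conv k (LinearMap.mul' k A ∘ₗ TensorProduct.map β (convOne k))
      (β ∘ₗ TensorProduct.map (LinearMap.mul' k H) LinearMap.id)
  = conv k
      (LinearMap.mul' k A ∘ₗ TensorProduct.map (convOne k) β
        ∘ₗ (TensorProduct.assoc k H H H).toLinearMap)
      (β ∘ₗ TensorProduct.map LinearMap.id (LinearMap.mul' k H)
        ∘ₗ (TensorProduct.assoc k H H H).toLinearMap)

/-- `β` and `βinv` are mutually inverse for the convolution product. -/
def IsConvInverse {A : Type} [CommRing A] [Algebra k A]
    (β βinv : H ⊗[k] H →ₗ[k] A) : Prop :=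
  conv k β βinv = convOne k ∧ conv k βinv β = convOne k

end CocycleDefs

variable (C : Type) [AddCommGroup C] [Module k C] [Coalgebra k C]

/-- A model of Takeuchi's free commutative Hopf algebra `S(t_C)_Θ` generated by the
coalgebra `C`, together with its generators `t_x` and `t⁻¹_x`. -/
structure TakData (T : Type) [CommRing T] [HopfAlgebra k T] where
  t : C →ₗ[k] T
  tinv : C →ₗ[k] T
  comul_t : Coalgebra.comul ∘ₗ t = TensorProduct.map t t ∘ₗ Coalgebra.comul
  counit_t : Coalgebra.counit ∘ₗ t = Coalgebra.counit
  comul_tinv : Coalgebra.comul ∘ₗ tinv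
    = TensorProduct.map tinv tinv ∘ₗ (TensorProduct.comm k C C).toLinearMap ∘ₗ Coalgebra.comul
  counit_tinv : Coalgebra.counit ∘ₗ tinv = Coalgebra.counit
  conv_t_tinv : conv k t tinv = convOne k
  conv_tinv_t : conv k tinv t = convOne k
  antipode_t : HopfAlgebra.antipode (R := k) ∘ₗ t = tinv
  antipode_tinv : HopfAlgebra.antipode (R := k) ∘ₗ tinv = t
  adjoin_eq_top : Algebra.adjoin k (Set.range ⇑t ∪ Set.range ⇑tinv) = ⊤

namespace TakData

variable {k C} {H : Type} [Ring H] [HopfAlgebra k H]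
variable {T : Type} [CommRing T] [HopfAlgebra k T] (D : TakData k H T)

/-- `x ⊗ y ↦ t_x t_y`. -/
def tt : H ⊗[k] H →ₗ[k] T := LinearMap.mul' k T ∘ₗ TensorProduct.map D.t D.t

/-- `x ⊗ y ↦ t⁻¹_{xy}`. -/
def tinvMul : H ⊗[k] H →ₗ[k] T := D.tinv ∘ₗ LinearMap.mul' k H

/-- `x ⊗ y ↦ t_{xy}`. -/
def tMul : H ⊗[k] H →ₗ[k] T := D.t ∘ₗ LinearMap.mul' k H

/-- `x ⊗ y ↦ t⁻¹_x t⁻¹_y`. -/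
def tinvtinv : H ⊗[k] H →ₗ[k] T := LinearMap.mul' k T ∘ₗ TensorProduct.map D.tinv D.tinv

/-- The generic cocycle for the trivial cocycle: `σ(x,y) = t_{x₁} t_{y₁} t⁻¹_{x₂y₂}`. -/
def sigmaEps : H ⊗[k] H →ₗ[k] T := conv k D.tt D.tinvMul

/-- Its convolution inverse: `σ⁻¹(x,y) = t_{x₁y₁} t⁻¹_{x₂} t⁻¹_{y₂}`. -/
def sigmaEpsInv : H ⊗[k] H →ₗ[k] T := conv k D.tMul D.tinvtinv

/-- The generic cocycle attached to `α`: `σ_α(x,y) = t_{x₁} t_{y₁} α(x₂,y₂) t⁻¹_{x₃y₃}`. -/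
def sigma (α : H ⊗[k] H →ₗ[k] k) : H ⊗[k] H →ₗ[k] T :=
  conv k (conv k D.tt (Algebra.linearMap k T ∘ₗ α)) D.tinvMul

/-- The inverse generic cocycle: `σ_α⁻¹(x,y) = t_{x₁y₁} α⁻¹(x₂,y₂) t⁻¹_{x₃} t⁻¹_{y₃}`. -/
def sigmaInv (αinv : H ⊗[k] H →ₗ[k] k) : H ⊗[k] H →ₗ[k] T :=
  conv k (conv k D.tMul (Algebra.linearMap k T ∘ₗ αinv)) D.tinvtinv

/-- The generic base algebra `B_H^α`: the subalgebra of `S(t_H)_Θ` generated by the values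
of the generic cocycle `σ_α` and of its inverse. -/
def genBase (α αinv : H ⊗[k] H →ₗ[k] k) : Subalgebra k T :=
  Algebra.adjoin k
    (Set.range (fun p : H × H => D.sigma α (p.1 ⊗ₜ[k] p.2)) ∪
      Set.range (fun p : H × H => D.sigmaInv αinv (p.1 ⊗ₜ[k] p.2)))

/-- The generic base algebra `B_H` for the trivial cocycle. -/
def B : Subalgebra k T :=
  Algebra.adjoin k
    (Set.range (fun p : H × H => D.sigmaEps (p.1 ⊗ₜ[k] p.2)) ∪
      Set.range (fun p : H × H => D.sigmaEpsInv (p.1 ⊗ₜ[k] p.2)))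

end TakData

section Aux

open Coalgebra LinearMap

variable {k}
variable {Cc : Type} [AddCommGroup Cc] [Module k Cc] [Coalgebra k Cc]

/-- Post-composition with an algebra map distributes over convolution. -/
lemma algHom_comp_conv {A B' : Type} [Ring A] [Algebra k A] [Ring B'] [Algebra k B']
    (φ : A →ₐ[k] B') (f g : Cc →ₗ[k] A) :
    φ.toLinearMap ∘ₗ conv k f g = conv k (φ.toLinearMap ∘ₗ f) (φ.toLinearMap ∘ₗ g) := by
  have h1 : ∀ u : A ⊗[k] A,
      φ (LinearMap.mul' k A u)
        = LinearMap.mul' k B' (TensorProduct.map φ.toLinearMap φ.toLinearMap u) := by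
    intro u
    induction u using TensorProduct.induction_on with
    | zero => simp
    | tmul a b => simp
    | add u v hu hv => simp [hu, hv]
  apply LinearMap.ext
  intro x
  simp only [conv, LinearMap.comp_apply, AlgHom.toLinearMap_apply, TensorProduct.map_comp,
    h1]

/-- Unfolding a right-nested convolution. -/
lemma conv_conv {A : Type} [Ring A] [Algebra k A] (a b c : Cc →ₗ[k] A) :
    conv k a (conv k b c)
      = LinearMap.mul' k A
          ∘ₗ TensorProduct.map a (LinearMap.mul' k A ∘ₗ TensorProduct.map b c)
          ∘ₗ (Coalgebra.comul (R := k) (A := Cc)).lTensor Cc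
          ∘ₗ Coalgebra.comul := by
  apply LinearMap.ext
  intro x
  simp only [conv, LinearMap.comp_apply]
  induction (Coalgebra.comul (R := k) x) using TensorProduct.induction_on with
  | zero => simp
  | tmul u v => simp [conv]
  | add u v hu hv => simp only [map_add, hu, hv]

/-- Unfolding a left-nested convolution. -/
lemma conv_conv' {A : Type} [Ring A] [Algebra k A] (a b c : Cc →ₗ[k] A) :
    conv k (conv k a b) c
      = LinearMap.mul' k A
          ∘ₗ TensorProduct.map (LinearMap.mul' k A ∘ₗ TensorProduct.map a b) c
          ∘ₗ (Coalgebra.comul (R := k) (A := Cc)).rTensor Cc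
          ∘ₗ Coalgebra.comul := by
  apply LinearMap.ext
  intro x
  simp only [conv, LinearMap.comp_apply]
  induction (Coalgebra.comul (R := k) x) using TensorProduct.induction_on with
  | zero => simp
  | tmul u v => simp [conv]
  | add u v hu hv => simp only [map_add, hu, hv]

/-- The convolution product is associative. -/
lemma conv_assoc {A : Type} [Ring A] [Algebra k A] (a b c : Cc →ₗ[k] A) :
    conv k (conv k a b) c = conv k a (conv k b c) := by
  rw [conv_conv, conv_conv']
  have key : LinearMap.mul' k A
        ∘ₗ TensorProduct.map a (LinearMap.mul' k A ∘ₗ TensorProduct.map b c)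
        ∘ₗ (TensorProduct.assoc k Cc Cc Cc).toLinearMap
      = LinearMap.mul' k A
          ∘ₗ TensorProduct.map (LinearMap.mul' k A ∘ₗ TensorProduct.map a b) c := by
    apply TensorProduct.ext_threefold
    intro x y z
    simp [mul_assoc]
  have hco := Coalgebra.coassoc (R := k) (A := Cc)
  calc LinearMap.mul' k A
        ∘ₗ TensorProduct.map (LinearMap.mul' k A ∘ₗ TensorProduct.map a b) c
        ∘ₗ (Coalgebra.comul (R := k) (A := Cc)).rTensor Cc ∘ₗ Coalgebra.comul
      = (LinearMap.mul' k A
          ∘ₗ TensorProduct.map a (LinearMap.mul' k A ∘ₗ TensorProduct.map b c)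
          ∘ₗ (TensorProduct.assoc k Cc Cc Cc).toLinearMap)
          ∘ₗ (Coalgebra.comul (R := k) (A := Cc)).rTensor Cc ∘ₗ Coalgebra.comul := by
        rw [key]
        simp only [LinearMap.comp_assoc]
    _ = LinearMap.mul' k A
          ∘ₗ TensorProduct.map a (LinearMap.mul' k A ∘ₗ TensorProduct.map b c)
          ∘ₗ ((TensorProduct.assoc k Cc Cc Cc).toLinearMap
            ∘ₗ (Coalgebra.comul (R := k) (A := Cc)).rTensor Cc ∘ₗ Coalgebra.comul) := by
        simp only [LinearMap.comp_assoc]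
    _ = LinearMap.mul' k A
          ∘ₗ TensorProduct.map a (LinearMap.mul' k A ∘ₗ TensorProduct.map b c)
          ∘ₗ (Coalgebra.comul (R := k) (A := Cc)).lTensor Cc ∘ₗ Coalgebra.comul := by
        rw [hco]

section CommTarget

variable {T : Type} [CommRing T] [HopfAlgebra k T]

/-- The left inclusion `T → T ⊗ T` as a linear map. -/
def incl : T →ₗ[k] T ⊗[k] T :=
  (Algebra.TensorProduct.includeLeft (R := k) (S := k) (A := T) (B := T)).toLinearMap

/-- The right inclusion `T → T ⊗ T` as a linear map. -/
def incr : T →ₗ[k] T ⊗[k] T :=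
  (Algebra.TensorProduct.includeRight (R := k) (A := T) (B := T)).toLinearMap

@[simp] lemma incl_apply (a : T) : (incl (k := k)) a = a ⊗ₜ[k] 1 := rfl
@[simp] lemma incr_apply (a : T) : (incr (k := k)) a = 1 ⊗ₜ[k] a := rfl

/-- The key structure computation: if `Δ f = (f ⊗ 1) * (1 ⊗ f)` and
`Δ g = (1 ⊗ g) * (g ⊗ 1)` in Sweedler form, then `Δ (f * g)` factors through the
convolution `f * g` in its second tensor leg. -/
lemma comul_comp_conv (f g : Cc →ₗ[k] T)
    (hf : Coalgebra.comul ∘ₗ f = conv k (incl ∘ₗ f) (incr ∘ₗ f))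
    (hg : Coalgebra.comul ∘ₗ g = conv k (incr ∘ₗ g) (incl ∘ₗ g)) :
    Coalgebra.comul ∘ₗ conv k f g
      = TensorProduct.map (LinearMap.mul' k T ∘ₗ TensorProduct.map f g) (conv k f g)
          ∘ₗ ((TensorProduct.assoc k Cc Cc Cc).symm.toLinearMap
              ∘ₗ ((TensorProduct.comm k Cc Cc).toLinearMap.lTensor Cc)
              ∘ₗ (Coalgebra.comul (R := k) (A := Cc)).lTensor Cc
              ∘ₗ Coalgebra.comul) := by
  have h0 : (Coalgebra.comul (R := k) (A := T))
      = (Bialgebra.comulAlgHom k T).toLinearMap := rfl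
  have step1 : Coalgebra.comul ∘ₗ conv k f g
      = conv k (Coalgebra.comul ∘ₗ f) (Coalgebra.comul ∘ₗ g) := by
    rw [h0, algHom_comp_conv]
  rw [step1, hf, hg, conv_assoc, ← conv_assoc (incr ∘ₗ f) (incr ∘ₗ g) (incl ∘ₗ g)]
  have step2 : conv k (incr ∘ₗ f) (incr ∘ₗ g) = incr ∘ₗ conv k f g :=
    (algHom_comp_conv (Algebra.TensorProduct.includeRight (R := k) (A := T) (B := T))
      f g).symm
  rw [step2, conv_conv]
  have key : LinearMap.mul' k (T ⊗[k] T)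
        ∘ₗ TensorProduct.map (incl ∘ₗ f)
            (LinearMap.mul' k (T ⊗[k] T)
              ∘ₗ TensorProduct.map (incr ∘ₗ conv k f g) (incl ∘ₗ g))
      = TensorProduct.map (LinearMap.mul' k T ∘ₗ TensorProduct.map f g) (conv k f g)
          ∘ₗ ((TensorProduct.assoc k Cc Cc Cc).symm.toLinearMap
              ∘ₗ ((TensorProduct.comm k Cc Cc).toLinearMap.lTensor Cc)) := by
    apply TensorProduct.ext'
    intro c1 w
    induction w using TensorProduct.induction_on with
    | zero => simp
    | tmul c2 c3 =>
        simp [Algebra.TensorProduct.tmul_mul_tmul]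
    | add u v hu hv =>
        simp only [TensorProduct.tmul_add, map_add, hu, hv]
  calc LinearMap.mul' k (T ⊗[k] T)
        ∘ₗ TensorProduct.map (incl ∘ₗ f)
            (LinearMap.mul' k (T ⊗[k] T)
              ∘ₗ TensorProduct.map (incr ∘ₗ conv k f g) (incl ∘ₗ g))
        ∘ₗ (Coalgebra.comul (R := k) (A := Cc)).lTensor Cc ∘ₗ Coalgebra.comul
      = (LinearMap.mul' k (T ⊗[k] T)
        ∘ₗ TensorProduct.map (incl ∘ₗ f)
            (LinearMap.mul' k (T ⊗[k] T)
              ∘ₗ TensorProduct.map (incr ∘ₗ conv k f g) (incl ∘ₗ g)))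
        ∘ₗ (Coalgebra.comul (R := k) (A := Cc)).lTensor Cc ∘ₗ Coalgebra.comul := by
        simp only [LinearMap.comp_assoc]
    _ = _ := by
        rw [key]
        simp only [LinearMap.comp_assoc]

end CommTarget

end Aux

namespace TakData

open Coalgebra

variable {k}
variable {H : Type} [Ring H] [HopfAlgebra k H]
variable {T : Type} [CommRing T] [HopfAlgebra k T] (D : TakData k H T)

lemma comul_tt : Coalgebra.comul ∘ₗ D.tt = conv k (incl ∘ₗ D.tt) (incr ∘ₗ D.tt) := by
  apply TensorProduct.ext'
  intro x y
  have hx := LinearMap.congr_fun D.comul_t x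
  have hy := LinearMap.congr_fun D.comul_t y
  simp only [LinearMap.comp_apply] at hx hy
  simp only [LinearMap.comp_apply, conv, tt, TensorProduct.map_tmul,
    LinearMap.mul'_apply, TensorProduct.comul_tmul, Bialgebra.comul_mul,
    hx, hy]
  induction (Coalgebra.comul (R := k) x) using TensorProduct.induction_on with
  | zero => simp
  | tmul x1 x2 =>
      induction (Coalgebra.comul (R := k) y) using TensorProduct.induction_on with
      | zero => simp
      | tmul y1 y2 =>
          simp [tt, Algebra.TensorProduct.tmul_mul_tmul]
      | add u v hu hv =>
          simp only [map_add, TensorProduct.tmul_add, mul_add, hu, hv]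
  | add u v hu hv =>
      simp only [map_add, TensorProduct.add_tmul, add_mul, hu, hv]

lemma comul_tinvMul :
    Coalgebra.comul ∘ₗ D.tinvMul = conv k (incr ∘ₗ D.tinvMul) (incl ∘ₗ D.tinvMul) := by
  apply TensorProduct.ext'
  intro x y
  have hxy := LinearMap.congr_fun D.comul_tinv (x * y)
  simp only [LinearMap.comp_apply] at hxy
  simp only [LinearMap.comp_apply, conv, tinvMul, TensorProduct.map_tmul,
    LinearMap.mul'_apply, TensorProduct.comul_tmul, hxy,
    Bialgebra.comul_mul]
  induction (Coalgebra.comul (R := k) x) using TensorProduct.induction_on with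
  | zero => simp
  | tmul x1 x2 =>
      induction (Coalgebra.comul (R := k) y) using TensorProduct.induction_on with
      | zero => simp
      | tmul y1 y2 =>
          simp [tinvMul, Algebra.TensorProduct.tmul_mul_tmul]
      | add u v hu hv =>
          simp only [map_add, TensorProduct.tmul_add, mul_add, hu, hv]
  | add u v hu hv =>
      simp only [map_add, TensorProduct.add_tmul, add_mul, hu, hv]

lemma comul_tMul :
    Coalgebra.comul ∘ₗ D.tMul = conv k (incl ∘ₗ D.tMul) (incr ∘ₗ D.tMul) := by
  apply TensorProduct.ext'
  intro x y
  have hxy := LinearMap.congr_fun D.comul_t (x * y)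
  simp only [LinearMap.comp_apply] at hxy
  simp only [LinearMap.comp_apply, conv, tMul, TensorProduct.map_tmul,
    LinearMap.mul'_apply, TensorProduct.comul_tmul, hxy,
    Bialgebra.comul_mul]
  induction (Coalgebra.comul (R := k) x) using TensorProduct.induction_on with
  | zero => simp
  | tmul x1 x2 =>
      induction (Coalgebra.comul (R := k) y) using TensorProduct.induction_on with
      | zero => simp
      | tmul y1 y2 =>
          simp [tMul, Algebra.TensorProduct.tmul_mul_tmul]
      | add u v hu hv =>
          simp only [map_add, TensorProduct.tmul_add, mul_add, hu, hv]
  | add u v hu hv =>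
      simp only [map_add, TensorProduct.add_tmul, add_mul, hu, hv]

lemma comul_tinvtinv :
    Coalgebra.comul ∘ₗ D.tinvtinv
      = conv k (incr ∘ₗ D.tinvtinv) (incl ∘ₗ D.tinvtinv) := by
  apply TensorProduct.ext'
  intro x y
  have hx := LinearMap.congr_fun D.comul_tinv x
  have hy := LinearMap.congr_fun D.comul_tinv y
  simp only [LinearMap.comp_apply] at hx hy
  simp only [LinearMap.comp_apply, conv, tinvtinv, TensorProduct.map_tmul,
    LinearMap.mul'_apply, TensorProduct.comul_tmul, Bialgebra.comul_mul,
    hx, hy]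
  induction (Coalgebra.comul (R := k) x) using TensorProduct.induction_on with
  | zero => simp
  | tmul x1 x2 =>
      induction (Coalgebra.comul (R := k) y) using TensorProduct.induction_on with
      | zero => simp
      | tmul y1 y2 =>
          simp [tinvtinv, Algebra.TensorProduct.tmul_mul_tmul]
      | add u v hu hv =>
          simp only [map_add, TensorProduct.tmul_add, mul_add, hu, hv]
  | add u v hu hv =>
      simp only [map_add, TensorProduct.add_tmul, add_mul, hu, hv]

lemma sigmaEps_mem (c : H ⊗[k] H) : D.sigmaEps c ∈ Subalgebra.toSubmodule D.B := by
  induction c using TensorProduct.induction_on with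
  | zero => rw [map_zero]; exact zero_mem _
  | tmul x y => exact Algebra.subset_adjoin (Or.inl ⟨(x, y), rfl⟩)
  | add u v hu hv => rw [map_add]; exact add_mem hu hv

lemma sigmaEpsInv_mem (c : H ⊗[k] H) : D.sigmaEpsInv c ∈ Subalgebra.toSubmodule D.B := by
  induction c using TensorProduct.induction_on with
  | zero => rw [map_zero]; exact zero_mem _
  | tmul x y => exact Algebra.subset_adjoin (Or.inr ⟨(x, y), rfl⟩)
  | add u v hu hv => rw [map_add]; exact add_mem hu hv

lemma comul_mem_of_factor {g : H ⊗[k] H →ₗ[k] T}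
    (hmem : ∀ c, g c ∈ Subalgebra.toSubmodule D.B)
    {q : (H ⊗[k] H) ⊗[k] (H ⊗[k] H) →ₗ[k] T}
    {W : H ⊗[k] H →ₗ[k] ((H ⊗[k] H) ⊗[k] (H ⊗[k] H)) ⊗[k] (H ⊗[k] H)}
    (hfac : Coalgebra.comul ∘ₗ g = TensorProduct.map q g ∘ₗ W) (c : H ⊗[k] H) :
    Coalgebra.comul (R := k) (g c) ∈
      LinearMap.range
        (TensorProduct.map (LinearMap.id : T →ₗ[k] T)
          (Subalgebra.toSubmodule D.B).subtype) := by
  have h1 : Coalgebra.comul (R := k) (g c) = TensorProduct.map q g (W c) :=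
    LinearMap.congr_fun hfac c
  set gB : H ⊗[k] H →ₗ[k] (Subalgebra.toSubmodule D.B) :=
    g.codRestrict (Subalgebra.toSubmodule D.B) hmem with hgB
  have h2 : g = (Subalgebra.toSubmodule D.B).subtype ∘ₗ gB :=
    (LinearMap.subtype_comp_codRestrict g _ hmem).symm
  have h3 : TensorProduct.map q g
      = TensorProduct.map (LinearMap.id : T →ₗ[k] T)
          (Subalgebra.toSubmodule D.B).subtype ∘ₗ TensorProduct.map q gB := by
    rw [← TensorProduct.map_comp, LinearMap.id_comp, ← h2]
  exact ⟨TensorProduct.map q gB (W c), by rw [h1, h3]; rfl⟩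

lemma comul_sigmaEps_mem (c : H ⊗[k] H) :
    Coalgebra.comul (R := k) (D.sigmaEps c) ∈
      LinearMap.range
        (TensorProduct.map (LinearMap.id : T →ₗ[k] T)
          (Subalgebra.toSubmodule D.B).subtype) := by
  exact D.comul_mem_of_factor D.sigmaEps_mem
    (comul_comp_conv D.tt D.tinvMul D.comul_tt D.comul_tinvMul) c

lemma comul_sigmaEpsInv_mem (c : H ⊗[k] H) :
    Coalgebra.comul (R := k) (D.sigmaEpsInv c) ∈
      LinearMap.range
        (TensorProduct.map (LinearMap.id : T →ₗ[k] T)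
          (Subalgebra.toSubmodule D.B).subtype) := by
  exact D.comul_mem_of_factor D.sigmaEpsInv_mem
    (comul_comp_conv D.tMul D.tinvtinv D.comul_tMul D.comul_tinvtinv) c

end TakData

/-- The generic base algebra `B_H` is a left coideal subalgebra of
`S(t_H)_Θ`: for every `b ∈ B_H`, `Δ(b)` lies in the image of `S(t_H)_Θ ⊗ B_H`. -/
theorem genBase_is_left_coideal_subalgebra
    {H : Type} [Ring H] [HopfAlgebra k H]
    {T : Type} [CommRing T] [HopfAlgebra k T] (D : TakData k H T) :
    ∀ b ∈ D.B,
      Coalgebra.comul (R := k) b ∈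
        LinearMap.range
          (TensorProduct.map (LinearMap.id : T →ₗ[k] T)
            (Subalgebra.toSubmodule D.B).subtype) := by
  intro b hb
  set ι := (Subalgebra.toSubmodule D.B).subtype with hι
  set Φ := TensorProduct.map (LinearMap.id : T →ₗ[k] T) ι with hΦ
  have hmul : ∀ u v : T ⊗[k] T, u ∈ LinearMap.range Φ → v ∈ LinearMap.range Φ →
      u * v ∈ LinearMap.range Φ := by
    rintro u v ⟨z1, rfl⟩ ⟨z2, rfl⟩
    induction z1 using TensorProduct.induction_on with
    | zero => exact ⟨0, by simp⟩
    | tmul a b1 =>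
        induction z2 using TensorProduct.induction_on with
        | zero => exact ⟨0, by simp⟩
        | tmul a' b2 =>
            refine ⟨(a * a') ⊗ₜ[k] ⟨(b1 : T) * (b2 : T), ?_⟩, ?_⟩
            · exact (Subalgebra.mem_toSubmodule _).2
                (mul_mem ((Subalgebra.mem_toSubmodule _).1 b1.2)
                  ((Subalgebra.mem_toSubmodule _).1 b2.2))
            · simp [hΦ, hι, Algebra.TensorProduct.tmul_mul_tmul]
        | add w1 w2 hw1 hw2 =>
            rw [map_add, mul_add]
            exact add_mem hw1 hw2
    | add w1 w2 hw1 hw2 =>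
        rw [map_add, add_mul]
        exact add_mem hw1 hw2
  refine Algebra.adjoin_induction ?_ ?_ ?_ ?_ hb
  · rintro x (⟨⟨p1, p2⟩, rfl⟩ | ⟨⟨p1, p2⟩, rfl⟩)
    · exact D.comul_sigmaEps_mem _
    · exact D.comul_sigmaEpsInv_mem _
  · intro r
    refine ⟨r • ((1 : T) ⊗ₜ[k] (⟨1, (Subalgebra.mem_toSubmodule _).2 (one_mem _)⟩ : Subalgebra.toSubmodule D.B)), ?_⟩
    rw [map_smul]
    have : Φ ((1 : T) ⊗ₜ[k] (⟨1, (Subalgebra.mem_toSubmodule _).2 (one_mem _)⟩ : Subalgebra.toSubmodule D.B))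
        = (1 : T ⊗[k] T) := by
      simp [hΦ, hι, Algebra.TensorProduct.one_def]
    rw [this, Bialgebra.comul_algebraMap, Algebra.algebraMap_eq_smul_one]
  · intro x y _ _ hx hy
    rw [map_add]
    exact add_mem hx hy
  · intro x y _ _ hx hy
    rw [Bialgebra.comul_mul]
    exact hmul _ _ hx hy
end
end

section
/- Let H be a cocommutative Hopf algebra. Then the generic base algebra B_H is a Hopf subalgebra of S(t_H)_Θ: it satisfies Δ(σ(x,y)) = σ(x₁,y₁) ⊗ σ(x₂,y₂), Δ(σ⁻¹(x,y)) = σ⁻¹(x₁,y₁) ⊗ σ⁻¹(x₂,y₂), S(σ(x,y)) = σ⁻¹(x,y), and S(σ⁻¹(x,y)) = σ(x,y). -/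
open TensorProduct

noncomputable section

variable (k : Type) [Field k]

variable (C : Type) [AddCommGroup C] [Module k C] [Coalgebra k C]

/-! ### Auxiliary convolution-algebra toolkit -/

section ConvToolkit

variable {k}
variable {CC DD : Type} [AddCommGroup CC] [Module k CC] [Coalgebra k CC]
  [AddCommGroup DD] [Module k DD] [Coalgebra k DD]
variable {AA BB : Type} [CommRing AA] [Algebra k AA] [CommRing BB] [Algebra k BB]

lemma mul'_assoc' :
    LinearMap.mul' k AA ∘ₗ (LinearMap.mul' k AA).rTensor AA
      = LinearMap.mul' k AA ∘ₗ (LinearMap.mul' k AA).lTensor AA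
          ∘ₗ (TensorProduct.assoc k AA AA AA).toLinearMap := by
  apply TensorProduct.ext_threefold
  intro a b c
  simp [mul_assoc]

lemma map_right_comp (X : CC ⊗[k] CC →ₗ[k] AA) (h : CC →ₗ[k] AA) :
    TensorProduct.map (X ∘ₗ Coalgebra.comul) h
      = TensorProduct.map X h ∘ₗ (Coalgebra.comul (R := k) (A := CC)).rTensor CC := by
  rw [LinearMap.rTensor, ← TensorProduct.map_comp, LinearMap.comp_id]

lemma map_left_comp (X : CC ⊗[k] CC →ₗ[k] AA) (f : CC →ₗ[k] AA) :
    TensorProduct.map f (X ∘ₗ Coalgebra.comul)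
      = TensorProduct.map f X ∘ₗ (Coalgebra.comul (R := k) (A := CC)).lTensor CC := by
  rw [LinearMap.lTensor, ← TensorProduct.map_comp, LinearMap.comp_id]

lemma conv_assoc_s14 (f g h : CC →ₗ[k] AA) :
    conv k (conv k f g) h = conv k f (conv k g h) := by
  unfold conv
  have e1 : TensorProduct.map (LinearMap.mul' k AA ∘ₗ TensorProduct.map f g ∘ₗ Coalgebra.comul) h
      = TensorProduct.map ((LinearMap.mul' k AA ∘ₗ TensorProduct.map f g) ∘ₗ Coalgebra.comul) h := by
    rw [LinearMap.comp_assoc]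
  have e2 : TensorProduct.map f (LinearMap.mul' k AA ∘ₗ TensorProduct.map g h ∘ₗ Coalgebra.comul)
      = TensorProduct.map f ((LinearMap.mul' k AA ∘ₗ TensorProduct.map g h) ∘ₗ Coalgebra.comul) := by
    rw [LinearMap.comp_assoc]
  rw [e1, e2, map_right_comp, map_left_comp]
  have h1 : TensorProduct.map (LinearMap.mul' k AA ∘ₗ TensorProduct.map f g) h
      = (LinearMap.mul' k AA).rTensor AA ∘ₗ TensorProduct.map (TensorProduct.map f g) h := by
    rw [LinearMap.rTensor, ← TensorProduct.map_comp, LinearMap.id_comp]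
  have h2 : TensorProduct.map f (LinearMap.mul' k AA ∘ₗ TensorProduct.map g h)
      = (LinearMap.mul' k AA).lTensor AA ∘ₗ TensorProduct.map f (TensorProduct.map g h) := by
    rw [LinearMap.lTensor, ← TensorProduct.map_comp, LinearMap.id_comp]
  rw [h1, h2]
  have nat : (TensorProduct.assoc k AA AA AA).toLinearMap
        ∘ₗ TensorProduct.map (TensorProduct.map f g) h
      = TensorProduct.map f (TensorProduct.map g h)
        ∘ₗ (TensorProduct.assoc k CC CC CC).toLinearMap := by
    apply TensorProduct.ext_threefold; intro a b c; simp
  calc LinearMap.mul' k AA ∘ₗ ((LinearMap.mul' k AA).rTensor AA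
          ∘ₗ TensorProduct.map (TensorProduct.map f g) h)
        ∘ₗ (Coalgebra.comul (R := k) (A := CC)).rTensor CC ∘ₗ Coalgebra.comul
      = (LinearMap.mul' k AA ∘ₗ (LinearMap.mul' k AA).rTensor AA)
          ∘ₗ TensorProduct.map (TensorProduct.map f g) h
          ∘ₗ (Coalgebra.comul (R := k) (A := CC)).rTensor CC ∘ₗ Coalgebra.comul := by
        simp only [LinearMap.comp_assoc]
    _ = LinearMap.mul' k AA ∘ₗ (LinearMap.mul' k AA).lTensor AA
          ∘ₗ (TensorProduct.assoc k AA AA AA).toLinearMap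
          ∘ₗ TensorProduct.map (TensorProduct.map f g) h
          ∘ₗ (Coalgebra.comul (R := k) (A := CC)).rTensor CC ∘ₗ Coalgebra.comul := by
        rw [mul'_assoc']; simp only [LinearMap.comp_assoc]
    _ = LinearMap.mul' k AA ∘ₗ (LinearMap.mul' k AA).lTensor AA
          ∘ₗ TensorProduct.map f (TensorProduct.map g h)
          ∘ₗ (TensorProduct.assoc k CC CC CC).toLinearMap
          ∘ₗ (Coalgebra.comul (R := k) (A := CC)).rTensor CC ∘ₗ Coalgebra.comul := by
        rw [← LinearMap.comp_assoc _ _ (TensorProduct.assoc k AA AA AA).toLinearMap]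
        rw [show (TensorProduct.assoc k AA AA AA).toLinearMap
            ∘ₗ TensorProduct.map (TensorProduct.map f g) h
            = TensorProduct.map f (TensorProduct.map g h)
              ∘ₗ (TensorProduct.assoc k CC CC CC).toLinearMap from nat]
        simp only [LinearMap.comp_assoc]
    _ = LinearMap.mul' k AA ∘ₗ (LinearMap.mul' k AA).lTensor AA
          ∘ₗ TensorProduct.map f (TensorProduct.map g h)
          ∘ₗ (Coalgebra.comul (R := k) (A := CC)).lTensor CC ∘ₗ Coalgebra.comul := by
        rw [show (TensorProduct.assoc k CC CC CC).toLinearMap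
            ∘ₗ (Coalgebra.comul (R := k) (A := CC)).rTensor CC ∘ₗ Coalgebra.comul
            = (Coalgebra.comul (R := k) (A := CC)).lTensor CC ∘ₗ Coalgebra.comul from
          Coalgebra.coassoc]
    _ = _ := by simp only [LinearMap.comp_assoc]

lemma conv_convOne (f : CC →ₗ[k] AA) : conv k f (convOne k) = f := by
  unfold conv convOne
  have h2 : TensorProduct.map f (Algebra.linearMap k AA ∘ₗ Coalgebra.counit)
      = (Algebra.linearMap k AA).lTensor AA ∘ₗ
        f.rTensor k ∘ₗ (Coalgebra.counit (R := k) (A := CC)).lTensor CC := by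
    rw [LinearMap.lTensor, LinearMap.rTensor, LinearMap.lTensor,
      ← TensorProduct.map_comp, ← TensorProduct.map_comp]
    simp
  rw [h2]
  have h3 : LinearMap.mul' k AA ∘ₗ (Algebra.linearMap k AA).lTensor AA
      = (TensorProduct.rid k AA).toLinearMap := by
    apply TensorProduct.ext'; intro a r
    simp [Algebra.smul_def, mul_comm]
  have h4 : (TensorProduct.rid k AA).toLinearMap ∘ₗ f.rTensor k
      = f ∘ₗ (TensorProduct.rid k CC).toLinearMap := by
    apply TensorProduct.ext'; intro c r; simp
  have h5 : (TensorProduct.rid k CC).toLinearMap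
        ∘ₗ (Coalgebra.counit (R := k) (A := CC)).lTensor CC ∘ₗ Coalgebra.comul
      = LinearMap.id := by
    rw [Coalgebra.lTensor_counit_comp_comul]
    apply LinearMap.ext; intro c; simp
  calc LinearMap.mul' k AA ∘ₗ ((Algebra.linearMap k AA).lTensor AA ∘ₗ
        f.rTensor k ∘ₗ (Coalgebra.counit (R := k) (A := CC)).lTensor CC) ∘ₗ Coalgebra.comul
      = ((LinearMap.mul' k AA ∘ₗ (Algebra.linearMap k AA).lTensor AA) ∘ₗ f.rTensor k)
          ∘ₗ (Coalgebra.counit (R := k) (A := CC)).lTensor CC ∘ₗ Coalgebra.comul := by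
        simp only [LinearMap.comp_assoc]
    _ = (f ∘ₗ (TensorProduct.rid k CC).toLinearMap)
          ∘ₗ (Coalgebra.counit (R := k) (A := CC)).lTensor CC ∘ₗ Coalgebra.comul := by
        rw [h3, h4]
    _ = f ∘ₗ ((TensorProduct.rid k CC).toLinearMap
          ∘ₗ (Coalgebra.counit (R := k) (A := CC)).lTensor CC ∘ₗ Coalgebra.comul) := by
        simp only [LinearMap.comp_assoc]
    _ = f := by rw [h5, LinearMap.comp_id]

lemma convOne_conv (f : CC →ₗ[k] AA) : conv k (convOne k) f = f := by
  unfold conv convOne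
  have h2 : TensorProduct.map (Algebra.linearMap k AA ∘ₗ Coalgebra.counit) f
      = (Algebra.linearMap k AA).rTensor AA ∘ₗ
        f.lTensor k ∘ₗ (Coalgebra.counit (R := k) (A := CC)).rTensor CC := by
    rw [LinearMap.lTensor, LinearMap.rTensor, LinearMap.rTensor,
      ← TensorProduct.map_comp, ← TensorProduct.map_comp]
    simp
  rw [h2]
  have h3 : LinearMap.mul' k AA ∘ₗ (Algebra.linearMap k AA).rTensor AA
      = (TensorProduct.lid k AA).toLinearMap := by
    apply TensorProduct.ext'; intro r a
    simp [Algebra.smul_def]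
  have h4 : (TensorProduct.lid k AA).toLinearMap ∘ₗ f.lTensor k
      = f ∘ₗ (TensorProduct.lid k CC).toLinearMap := by
    apply TensorProduct.ext'; intro r c; simp
  have h5 : (TensorProduct.lid k CC).toLinearMap
        ∘ₗ (Coalgebra.counit (R := k) (A := CC)).rTensor CC ∘ₗ Coalgebra.comul
      = LinearMap.id := by
    rw [Coalgebra.rTensor_counit_comp_comul]
    apply LinearMap.ext; intro c; simp
  calc LinearMap.mul' k AA ∘ₗ ((Algebra.linearMap k AA).rTensor AA ∘ₗ
        f.lTensor k ∘ₗ (Coalgebra.counit (R := k) (A := CC)).rTensor CC) ∘ₗ Coalgebra.comul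
      = ((LinearMap.mul' k AA ∘ₗ (Algebra.linearMap k AA).rTensor AA) ∘ₗ f.lTensor k)
          ∘ₗ (Coalgebra.counit (R := k) (A := CC)).rTensor CC ∘ₗ Coalgebra.comul := by
        simp only [LinearMap.comp_assoc]
    _ = (f ∘ₗ (TensorProduct.lid k CC).toLinearMap)
          ∘ₗ (Coalgebra.counit (R := k) (A := CC)).rTensor CC ∘ₗ Coalgebra.comul := by
        rw [h3, h4]
    _ = f ∘ₗ ((TensorProduct.lid k CC).toLinearMap
          ∘ₗ (Coalgebra.counit (R := k) (A := CC)).rTensor CC ∘ₗ Coalgebra.comul) := by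
        simp only [LinearMap.comp_assoc]
    _ = f := by rw [h5, LinearMap.comp_id]

lemma conv_comm (hC : (TensorProduct.comm k CC CC).toLinearMap ∘ₗ Coalgebra.comul
      = (Coalgebra.comul : CC →ₗ[k] CC ⊗[k] CC)) (f g : CC →ₗ[k] AA) :
    conv k f g = conv k g f := by
  unfold conv
  conv_rhs => rw [← hC]
  have nat : TensorProduct.map g f ∘ₗ (TensorProduct.comm k CC CC).toLinearMap
      = (TensorProduct.comm k AA AA).toLinearMap ∘ₗ TensorProduct.map f g := by
    apply TensorProduct.ext'; intro a b; simp
  have hm : LinearMap.mul' k AA ∘ₗ (TensorProduct.comm k AA AA).toLinearMap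
      = LinearMap.mul' k AA := by
    apply TensorProduct.ext'; intro a b; simp [mul_comm]
  rw [show TensorProduct.map g f ∘ₗ (TensorProduct.comm k CC CC).toLinearMap ∘ₗ Coalgebra.comul
      = (TensorProduct.map g f ∘ₗ (TensorProduct.comm k CC CC).toLinearMap) ∘ₗ Coalgebra.comul
    from rfl, nat]
  rw [show LinearMap.mul' k AA ∘ₗ ((TensorProduct.comm k AA AA).toLinearMap
        ∘ₗ TensorProduct.map f g) ∘ₗ Coalgebra.comul
      = (LinearMap.mul' k AA ∘ₗ (TensorProduct.comm k AA AA).toLinearMap)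
        ∘ₗ TensorProduct.map f g ∘ₗ Coalgebra.comul by simp only [LinearMap.comp_assoc]]
  rw [hm]

lemma algHom_comp_conv_s14 (ψ : AA →ₐ[k] BB) (f g : CC →ₗ[k] AA) :
    ψ.toLinearMap ∘ₗ conv k f g = conv k (ψ.toLinearMap ∘ₗ f) (ψ.toLinearMap ∘ₗ g) := by
  unfold conv
  have hm : ψ.toLinearMap ∘ₗ LinearMap.mul' k AA
      = LinearMap.mul' k BB ∘ₗ TensorProduct.map ψ.toLinearMap ψ.toLinearMap := by
    apply TensorProduct.ext'; intro a b; simp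
  rw [← LinearMap.comp_assoc, ← LinearMap.comp_assoc, hm]
  rw [TensorProduct.map_comp]
  simp only [LinearMap.comp_assoc]

lemma conv_comp_coalgMap (φ : DD →ₗ[k] CC)
    (hφ : Coalgebra.comul ∘ₗ φ = TensorProduct.map φ φ ∘ₗ Coalgebra.comul)
    (f g : CC →ₗ[k] AA) :
    conv k f g ∘ₗ φ = conv k (f ∘ₗ φ) (g ∘ₗ φ) := by
  unfold conv
  rw [LinearMap.comp_assoc, LinearMap.comp_assoc, hφ, TensorProduct.map_comp]
  simp only [LinearMap.comp_assoc]

lemma algHom_comp_convOne (ψ : AA →ₐ[k] BB) :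
    ψ.toLinearMap ∘ₗ (convOne k (C := CC) (A := AA)) = convOne k := by
  apply LinearMap.ext; intro c
  simp [convOne]

lemma convOne_comp (φ : DD →ₗ[k] CC)
    (hφ : Coalgebra.counit ∘ₗ φ = (Coalgebra.counit : DD →ₗ[k] k)) :
    (convOne k (C := CC) (A := AA)) ∘ₗ φ = convOne k := by
  unfold convOne
  rw [LinearMap.comp_assoc, hφ]

lemma convOne_k_eq : (convOne k (C := CC) (A := k)) = Coalgebra.counit := by
  apply LinearMap.ext; intro c
  simp [convOne]

lemma conv_eq_of_inv (f g h : CC →ₗ[k] AA)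
    (h1 : conv k f g = convOne k) (h2 : conv k h f = convOne k) : h = g := by
  calc h = conv k h (convOne k) := (conv_convOne h).symm
    _ = conv k h (conv k f g) := by rw [h1]
    _ = conv k (conv k h f) g := (conv_assoc_s14 h f g).symm
    _ = conv k (convOne k) g := by rw [h2]
    _ = g := convOne_conv g

lemma conv_conv_conv_comm
    (hC : (TensorProduct.comm k CC CC).toLinearMap ∘ₗ Coalgebra.comul
      = (Coalgebra.comul : CC →ₗ[k] CC ⊗[k] CC)) (a b c d : CC →ₗ[k] AA) :
    conv k (conv k a b) (conv k c d) = conv k (conv k a c) (conv k b d) := by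
  rw [conv_assoc_s14, ← conv_assoc_s14 b c d, conv_comm hC b c, conv_assoc_s14 c b d, ← conv_assoc_s14]

section MapLemmas
variable {M N : Type} [AddCommGroup M] [Module k M] [AddCommGroup N] [Module k N]
variable {A' B' : Type} [Ring A'] [Algebra k A'] [Ring B'] [Algebra k B']

lemma mul'_comp_map_map (f₁ f₂ : M →ₗ[k] A') (g₁ g₂ : N →ₗ[k] B') :
    LinearMap.mul' k (A' ⊗[k] B') ∘ₗ TensorProduct.map
        (TensorProduct.map f₁ g₁) (TensorProduct.map f₂ g₂)
      = TensorProduct.map (LinearMap.mul' k A' ∘ₗ TensorProduct.map f₁ f₂)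
          (LinearMap.mul' k B' ∘ₗ TensorProduct.map g₁ g₂)
        ∘ₗ (TensorProduct.tensorTensorTensorComm k M N M N).toLinearMap := by
  apply TensorProduct.ext_fourfold'
  intro m n m' n'
  simp [Algebra.TensorProduct.tmul_mul_tmul]

lemma mul'_eq_map_mul' :
    LinearMap.mul' k (A' ⊗[k] B')
      = TensorProduct.map (LinearMap.mul' k A') (LinearMap.mul' k B')
        ∘ₗ (TensorProduct.tensorTensorTensorComm k A' B' A' B').toLinearMap := by
  have := mul'_comp_map_map (k := k) (LinearMap.id (M := A')) LinearMap.id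
    (LinearMap.id (M := B')) LinearMap.id
  simpa [TensorProduct.map_id] using this

end MapLemmas

lemma comm_comp_comul_tensor
    (hC : (TensorProduct.comm k CC CC).toLinearMap ∘ₗ Coalgebra.comul
      = (Coalgebra.comul : CC →ₗ[k] CC ⊗[k] CC))
    (hD : (TensorProduct.comm k DD DD).toLinearMap ∘ₗ Coalgebra.comul
      = (Coalgebra.comul : DD →ₗ[k] DD ⊗[k] DD)) :
    (TensorProduct.comm k (CC ⊗[k] DD) (CC ⊗[k] DD)).toLinearMap ∘ₗ Coalgebra.comul
      = (Coalgebra.comul : CC ⊗[k] DD →ₗ[k] (CC ⊗[k] DD) ⊗[k] (CC ⊗[k] DD)) := by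
  show (TensorProduct.comm k (CC ⊗[k] DD) (CC ⊗[k] DD)).toLinearMap
      ∘ₗ (TensorProduct.tensorTensorTensorComm k CC CC DD DD).toLinearMap
      ∘ₗ TensorProduct.map Coalgebra.comul Coalgebra.comul
    = (TensorProduct.tensorTensorTensorComm k CC CC DD DD).toLinearMap
      ∘ₗ TensorProduct.map Coalgebra.comul Coalgebra.comul
  have key : (TensorProduct.comm k (CC ⊗[k] DD) (CC ⊗[k] DD)).toLinearMap
        ∘ₗ (TensorProduct.tensorTensorTensorComm k CC CC DD DD).toLinearMap
      = (TensorProduct.tensorTensorTensorComm k CC CC DD DD).toLinearMap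
        ∘ₗ TensorProduct.map (TensorProduct.comm k CC CC).toLinearMap
            (TensorProduct.comm k DD DD).toLinearMap := by
    apply TensorProduct.ext_fourfold'
    intro a b c d
    simp
  rw [← LinearMap.comp_assoc, key, LinearMap.comp_assoc, ← TensorProduct.map_comp, hC, hD]

lemma mul'_comp_map_convOne_convOne :
    LinearMap.mul' k AA ∘ₗ TensorProduct.map (convOne k (C := CC)) (convOne k (C := DD))
      = convOne k (C := CC ⊗[k] DD) (A := AA) := by
  apply TensorProduct.ext'
  intro c d
  show algebraMap k AA (Coalgebra.counit c) * algebraMap k AA (Coalgebra.counit d)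
    = algebraMap k AA (Coalgebra.counit (c ⊗ₜ[k] d))
  rw [← map_mul]
  rw [TensorProduct.counit_tmul, smul_eq_mul, mul_comm]

lemma conv_mul_mul (f₁ f₂ : CC →ₗ[k] AA) (g₁ g₂ : DD →ₗ[k] AA) :
    conv k (LinearMap.mul' k AA ∘ₗ TensorProduct.map f₁ g₁)
        (LinearMap.mul' k AA ∘ₗ TensorProduct.map f₂ g₂)
      = LinearMap.mul' k AA ∘ₗ TensorProduct.map (conv k f₁ f₂) (conv k g₁ g₂) := by
  unfold conv
  have key : LinearMap.mul' k AA ∘ₗ TensorProduct.map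
        (LinearMap.mul' k AA ∘ₗ TensorProduct.map f₁ g₁)
        (LinearMap.mul' k AA ∘ₗ TensorProduct.map f₂ g₂)
      = (LinearMap.mul' k AA ∘ₗ TensorProduct.map
          (LinearMap.mul' k AA ∘ₗ TensorProduct.map f₁ f₂)
          (LinearMap.mul' k AA ∘ₗ TensorProduct.map g₁ g₂))
        ∘ₗ (TensorProduct.tensorTensorTensorComm k CC DD CC DD).toLinearMap := by
    apply TensorProduct.ext_fourfold'
    intro c d c' d'
    show (f₁ c * g₁ d) * (f₂ c' * g₂ d') = (f₁ c * f₂ c') * (g₁ d * g₂ d')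
    ring
  rw [show Coalgebra.comul (R := k) (A := CC ⊗[k] DD)
      = (TensorProduct.tensorTensorTensorComm k CC CC DD DD).toLinearMap
        ∘ₗ TensorProduct.map Coalgebra.comul Coalgebra.comul from rfl]
  rw [← LinearMap.comp_assoc, key]
  have inv : (TensorProduct.tensorTensorTensorComm k CC DD CC DD).toLinearMap
      ∘ₗ (TensorProduct.tensorTensorTensorComm k CC CC DD DD).toLinearMap
      = LinearMap.id := by
    apply TensorProduct.ext_fourfold'
    intro a b c d
    simp
  rw [LinearMap.comp_assoc,
    ← LinearMap.comp_assoc _ _ (TensorProduct.tensorTensorTensorComm k CC DD CC DD).toLinearMap,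
    inv, LinearMap.id_comp, LinearMap.comp_assoc, ← TensorProduct.map_comp]
  simp only [LinearMap.comp_assoc]

section Bialg
variable {A' : Type} [Ring A'] [Bialgebra k A']

lemma comul_comp_mul' :
    (Coalgebra.comul (R := k) (A := A')) ∘ₗ LinearMap.mul' k A'
      = LinearMap.mul' k (A' ⊗[k] A') ∘ₗ TensorProduct.map Coalgebra.comul Coalgebra.comul := by
  apply TensorProduct.ext'
  intro a b
  simpa using map_mul (Bialgebra.comulAlgHom k A') a b

lemma counit_comp_mul' :
    (Coalgebra.counit (R := k) (A := A')) ∘ₗ LinearMap.mul' k A'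
      = (Coalgebra.counit (R := k) (A := A' ⊗[k] A')) := by
  apply TensorProduct.ext'
  intro a b
  show Coalgebra.counit (a * b) = Coalgebra.counit (R := k) (a ⊗ₜ[k] b)
  rw [TensorProduct.counit_tmul, smul_eq_mul, mul_comm]
  exact map_mul (Bialgebra.counitAlgHom k A') a b

/-- Multiplication is a coalgebra morphism for the tensor-product coalgebra structure. -/
lemma comul_comp_mul'' :
    (Coalgebra.comul (R := k) (A := A')) ∘ₗ LinearMap.mul' k A'
      = TensorProduct.map (LinearMap.mul' k A') (LinearMap.mul' k A')
        ∘ₗ (Coalgebra.comul (R := k) (A := A' ⊗[k] A')) := by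
  rw [comul_comp_mul', mul'_eq_map_mul']
  rw [show Coalgebra.comul (R := k) (A := A' ⊗[k] A')
      = (TensorProduct.tensorTensorTensorComm k A' A' A' A').toLinearMap
        ∘ₗ TensorProduct.map Coalgebra.comul Coalgebra.comul from rfl]
  simp only [LinearMap.comp_assoc]

end Bialg

section Hopf
variable {TT : Type} [CommRing TT] [HopfAlgebra k TT]

lemma conv_antipode_right (f : CC →ₗ[k] TT)
    (hΔ : Coalgebra.comul ∘ₗ f = TensorProduct.map f f ∘ₗ Coalgebra.comul)
    (hε : Coalgebra.counit ∘ₗ f = (Coalgebra.counit : CC →ₗ[k] k)) :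
    conv k f (HopfAlgebra.antipode (R := k) ∘ₗ f) = convOne k := by
  unfold conv convOne
  have e1 : TensorProduct.map f (HopfAlgebra.antipode (R := k) ∘ₗ f)
      = (HopfAlgebra.antipode (R := k)).lTensor TT ∘ₗ TensorProduct.map f f := by
    rw [LinearMap.lTensor, ← TensorProduct.map_comp, LinearMap.id_comp]
  rw [e1]
  simp only [LinearMap.comp_assoc]
  rw [← hΔ]
  rw [show (HopfAlgebra.antipode (R := k)).lTensor TT ∘ₗ Coalgebra.comul ∘ₗ f
      = ((HopfAlgebra.antipode (R := k)).lTensor TT ∘ₗ Coalgebra.comul) ∘ₗ f from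
    (LinearMap.comp_assoc _ _ _).symm]
  rw [← LinearMap.comp_assoc]
  rw [show LinearMap.mul' k TT ∘ₗ (HopfAlgebra.antipode (R := k)).lTensor TT ∘ₗ Coalgebra.comul
      = Algebra.linearMap k TT ∘ₗ Coalgebra.counit from HopfAlgebra.mul_antipode_lTensor_comul]
  rw [LinearMap.comp_assoc, hε]

lemma conv_antipode_left (f : CC →ₗ[k] TT)
    (hΔ : Coalgebra.comul ∘ₗ f = TensorProduct.map f f ∘ₗ Coalgebra.comul)
    (hε : Coalgebra.counit ∘ₗ f = (Coalgebra.counit : CC →ₗ[k] k)) :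
    conv k (HopfAlgebra.antipode (R := k) ∘ₗ f) f = convOne k := by
  unfold conv convOne
  have e1 : TensorProduct.map (HopfAlgebra.antipode (R := k) ∘ₗ f) f
      = (HopfAlgebra.antipode (R := k)).rTensor TT ∘ₗ TensorProduct.map f f := by
    rw [LinearMap.rTensor, ← TensorProduct.map_comp, LinearMap.id_comp]
  rw [e1]
  simp only [LinearMap.comp_assoc]
  rw [← hΔ]
  rw [show (HopfAlgebra.antipode (R := k)).rTensor TT ∘ₗ Coalgebra.comul ∘ₗ f
      = ((HopfAlgebra.antipode (R := k)).rTensor TT ∘ₗ Coalgebra.comul) ∘ₗ f from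
    (LinearMap.comp_assoc _ _ _).symm]
  rw [← LinearMap.comp_assoc]
  rw [show LinearMap.mul' k TT ∘ₗ (HopfAlgebra.antipode (R := k)).rTensor TT ∘ₗ Coalgebra.comul
      = Algebra.linearMap k TT ∘ₗ Coalgebra.counit from HopfAlgebra.mul_antipode_rTensor_comul]
  rw [LinearMap.comp_assoc, hε]

lemma antipode_conv_id :
    conv k (HopfAlgebra.antipode (R := k) (A := TT)) LinearMap.id = convOne k := by
  unfold conv convOne
  rw [show TensorProduct.map (HopfAlgebra.antipode (R := k) (A := TT)) LinearMap.id
      = (HopfAlgebra.antipode (R := k)).rTensor TT from rfl]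
  exact HopfAlgebra.mul_antipode_rTensor_comul

/-- The antipode of a commutative Hopf algebra is multiplicative (as linear maps). -/
lemma antipode_comp_mul' :
    LinearMap.mul' k TT ∘ₗ TensorProduct.map (HopfAlgebra.antipode (R := k))
        (HopfAlgebra.antipode (R := k))
      = HopfAlgebra.antipode (R := k) ∘ₗ LinearMap.mul' k TT := by
  apply conv_eq_of_inv (LinearMap.mul' k TT)
  · exact conv_antipode_right (LinearMap.mul' k TT) comul_comp_mul'' counit_comp_mul'
  · have h := conv_mul_mul (k := k) (HopfAlgebra.antipode (R := k) (A := TT)) LinearMap.id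
      (HopfAlgebra.antipode (R := k) (A := TT)) LinearMap.id
    rw [antipode_conv_id] at h
    rw [show TensorProduct.map (LinearMap.id (M := TT)) (LinearMap.id (M := TT))
        = LinearMap.id from TensorProduct.map_id, LinearMap.comp_id] at h
    rw [h, mul'_comp_map_convOne_convOne]

lemma antipode_mul (a b : TT) :
    HopfAlgebra.antipode (R := k) (a * b)
      = HopfAlgebra.antipode (R := k) a * HopfAlgebra.antipode (R := k) b := by
  have := LinearMap.congr_fun (antipode_comp_mul' (k := k) (TT := TT)) (a ⊗ₜ[k] b)
  simpa using this.symm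

lemma antipode_one' : HopfAlgebra.antipode (R := k) (1 : TT) = 1 := by
  have h := HopfAlgebra.mul_antipode_rTensor_comul_apply (R := k) (1 : TT)
  rw [Bialgebra.comul_one] at h
  simpa [Algebra.TensorProduct.one_def] using h

end Hopf

end ConvToolkit

section MainAux

variable {k}
variable {CC : Type} [AddCommGroup CC] [Module k CC] [Coalgebra k CC]
variable {AA : Type} [CommRing AA] [Algebra k AA]
variable {H' : Type} [Ring H'] [Bialgebra k H']
variable {T' : Type} [CommRing T'] [Bialgebra k T']

lemma phi_eq (f : CC →ₗ[k] AA) :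
    conv k ((Algebra.TensorProduct.includeLeft (R := k) (S := k)).toLinearMap ∘ₗ f)
        ((Algebra.TensorProduct.includeRight (R := k) (A := AA) (B := AA)).toLinearMap ∘ₗ f)
      = TensorProduct.map f f ∘ₗ Coalgebra.comul := by
  unfold conv
  rw [TensorProduct.map_comp]
  simp only [← LinearMap.comp_assoc]
  have : LinearMap.mul' k (AA ⊗[k] AA)
        ∘ₗ TensorProduct.map (Algebra.TensorProduct.includeLeft (R := k) (S := k)).toLinearMap
          (Algebra.TensorProduct.includeRight (R := k) (A := AA) (B := AA)).toLinearMap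
      = LinearMap.id := by
    apply TensorProduct.ext'
    intro a b
    show (a ⊗ₜ[k] (1 : AA)) * ((1 : AA) ⊗ₜ[k] b) = a ⊗ₜ[k] b
    rw [Algebra.TensorProduct.tmul_mul_tmul, mul_one, one_mul]
  rw [this, LinearMap.id_comp]

lemma phi_conv
    (hC : (TensorProduct.comm k CC CC).toLinearMap ∘ₗ Coalgebra.comul
      = (Coalgebra.comul : CC →ₗ[k] CC ⊗[k] CC)) (f g : CC →ₗ[k] AA) :
    conv k (TensorProduct.map f f ∘ₗ Coalgebra.comul)
        (TensorProduct.map g g ∘ₗ Coalgebra.comul)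
      = TensorProduct.map (conv k f g) (conv k f g) ∘ₗ Coalgebra.comul := by
  rw [← phi_eq f, ← phi_eq g, ← phi_eq (conv k f g), algHom_comp_conv_s14, algHom_comp_conv_s14,
    conv_conv_conv_comm hC]

lemma comul_mulmap (f : H' →ₗ[k] T')
    (hf : Coalgebra.comul ∘ₗ f = TensorProduct.map f f ∘ₗ Coalgebra.comul) :
    Coalgebra.comul ∘ₗ (LinearMap.mul' k T' ∘ₗ TensorProduct.map f f)
      = TensorProduct.map (LinearMap.mul' k T' ∘ₗ TensorProduct.map f f)
          (LinearMap.mul' k T' ∘ₗ TensorProduct.map f f) ∘ₗ Coalgebra.comul := by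
  rw [← LinearMap.comp_assoc, comul_comp_mul', LinearMap.comp_assoc, ← TensorProduct.map_comp,
    hf, TensorProduct.map_comp, ← LinearMap.comp_assoc, mul'_comp_map_map]
  rw [show Coalgebra.comul (R := k) (A := H' ⊗[k] H')
      = (TensorProduct.tensorTensorTensorComm k H' H' H' H').toLinearMap
        ∘ₗ TensorProduct.map Coalgebra.comul Coalgebra.comul from rfl]
  simp only [LinearMap.comp_assoc]

lemma comul_compmul (f : H' →ₗ[k] T')
    (hf : Coalgebra.comul ∘ₗ f = TensorProduct.map f f ∘ₗ Coalgebra.comul) :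
    Coalgebra.comul ∘ₗ (f ∘ₗ LinearMap.mul' k H')
      = TensorProduct.map (f ∘ₗ LinearMap.mul' k H')
          (f ∘ₗ LinearMap.mul' k H') ∘ₗ Coalgebra.comul := by
  rw [← LinearMap.comp_assoc, hf, LinearMap.comp_assoc, comul_comp_mul'',
    ← LinearMap.comp_assoc, ← TensorProduct.map_comp]

lemma counit_mulmap (f : H' →ₗ[k] T')
    (hf : Coalgebra.counit ∘ₗ f = (Coalgebra.counit : H' →ₗ[k] k)) :
    Coalgebra.counit ∘ₗ (LinearMap.mul' k T' ∘ₗ TensorProduct.map f f)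
      = (Coalgebra.counit : H' ⊗[k] H' →ₗ[k] k) := by
  rw [← LinearMap.comp_assoc, counit_comp_mul']
  apply TensorProduct.ext'
  intro a b
  have ha := LinearMap.congr_fun hf a
  have hb := LinearMap.congr_fun hf b
  simp only [LinearMap.comp_apply] at ha hb
  show Coalgebra.counit (R := k) (f a ⊗ₜ[k] f b) = Coalgebra.counit (R := k) (a ⊗ₜ[k] b)
  rw [TensorProduct.counit_tmul, TensorProduct.counit_tmul, ha, hb]

lemma counit_compmul (f : H' →ₗ[k] T')
    (hf : Coalgebra.counit ∘ₗ f = (Coalgebra.counit : H' →ₗ[k] k)) :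
    Coalgebra.counit ∘ₗ (f ∘ₗ LinearMap.mul' k H')
      = (Coalgebra.counit : H' ⊗[k] H' →ₗ[k] k) := by
  rw [← LinearMap.comp_assoc, hf, counit_comp_mul']

end MainAux

/-- For a cocommutative Hopf algebra `H`, the generic base algebra `B_H`
is a Hopf subalgebra of `S(t_H)_Θ`: one has `Δ(σ(x,y)) = σ(x₁,y₁) ⊗ σ(x₂,y₂)`,
`Δ(σ⁻¹(x,y)) = σ⁻¹(x₁,y₁) ⊗ σ⁻¹(x₂,y₂)`, `S(σ(x,y)) = σ⁻¹(x,y)`, `S(σ⁻¹(x,y)) = σ(x,y)`,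
and `B_H` is stable under comultiplication and the antipode. -/
theorem genBase_is_Hopf_subalgebra_of_cocommutative
    {H : Type} [Ring H] [HopfAlgebra k H]
    {T : Type} [CommRing T] [HopfAlgebra k T] (D : TakData k H T)
    (hcocomm : (TensorProduct.comm k H H).toLinearMap ∘ₗ Coalgebra.comul
      = (Coalgebra.comul : H →ₗ[k] H ⊗[k] H)) :
    (Coalgebra.comul ∘ₗ D.sigmaEps
      = TensorProduct.map D.sigmaEps D.sigmaEps ∘ₗ Coalgebra.comul) ∧
    (Coalgebra.comul ∘ₗ D.sigmaEpsInv
      = TensorProduct.map D.sigmaEpsInv D.sigmaEpsInv ∘ₗ Coalgebra.comul) ∧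
    (HopfAlgebra.antipode (R := k) ∘ₗ D.sigmaEps = D.sigmaEpsInv) ∧
    (HopfAlgebra.antipode (R := k) ∘ₗ D.sigmaEpsInv = D.sigmaEps) ∧
    (∀ b ∈ D.B, HopfAlgebra.antipode (R := k) b ∈ D.B) ∧
    (∀ b ∈ D.B,
      Coalgebra.comul (R := k) b ∈
        LinearMap.range
          (TensorProduct.map (Subalgebra.toSubmodule D.B).subtype
            (Subalgebra.toSubmodule D.B).subtype)) := by
  classical
  have hHH : (TensorProduct.comm k (H ⊗[k] H) (H ⊗[k] H)).toLinearMap ∘ₗ Coalgebra.comul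
      = (Coalgebra.comul : H ⊗[k] H →ₗ[k] (H ⊗[k] H) ⊗[k] (H ⊗[k] H)) :=
    comm_comp_comul_tensor hcocomm hcocomm
  have htinv : Coalgebra.comul ∘ₗ D.tinv = TensorProduct.map D.tinv D.tinv ∘ₗ Coalgebra.comul := by
    rw [D.comul_tinv, hcocomm]
  have hdtt : Coalgebra.comul ∘ₗ D.tt = TensorProduct.map D.tt D.tt ∘ₗ Coalgebra.comul := by
    simp only [TakData.tt]; exact comul_mulmap D.t D.comul_t
  have hdtinvtinv : Coalgebra.comul ∘ₗ D.tinvtinv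
      = TensorProduct.map D.tinvtinv D.tinvtinv ∘ₗ Coalgebra.comul := by
    simp only [TakData.tinvtinv]; exact comul_mulmap D.tinv htinv
  have hdtMul : Coalgebra.comul ∘ₗ D.tMul
      = TensorProduct.map D.tMul D.tMul ∘ₗ Coalgebra.comul := by
    simp only [TakData.tMul]; exact comul_compmul D.t D.comul_t
  have hdtinvMul : Coalgebra.comul ∘ₗ D.tinvMul
      = TensorProduct.map D.tinvMul D.tinvMul ∘ₗ Coalgebra.comul := by
    simp only [TakData.tinvMul]; exact comul_compmul D.tinv htinv
  have hett : Coalgebra.counit ∘ₗ D.tt = (Coalgebra.counit : H ⊗[k] H →ₗ[k] k) := by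
    simp only [TakData.tt]; exact counit_mulmap D.t D.counit_t
  have hetinvtinv : Coalgebra.counit ∘ₗ D.tinvtinv = (Coalgebra.counit : H ⊗[k] H →ₗ[k] k) := by
    simp only [TakData.tinvtinv]; exact counit_mulmap D.tinv D.counit_tinv
  have hetMul : Coalgebra.counit ∘ₗ D.tMul = (Coalgebra.counit : H ⊗[k] H →ₗ[k] k) := by
    simp only [TakData.tMul]; exact counit_compmul D.t D.counit_t
  have hetinvMul : Coalgebra.counit ∘ₗ D.tinvMul = (Coalgebra.counit : H ⊗[k] H →ₗ[k] k) := by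
    simp only [TakData.tinvMul]; exact counit_compmul D.tinv D.counit_tinv
  -- comultiplication compatibility for σ and σ⁻¹
  have hΔσ : Coalgebra.comul ∘ₗ D.sigmaEps
      = TensorProduct.map D.sigmaEps D.sigmaEps ∘ₗ Coalgebra.comul := by
    simp only [TakData.sigmaEps]
    have h0 : Coalgebra.comul ∘ₗ conv k D.tt D.tinvMul
        = conv k (Coalgebra.comul ∘ₗ D.tt) (Coalgebra.comul ∘ₗ D.tinvMul) :=
      algHom_comp_conv_s14 (Bialgebra.comulAlgHom k T) D.tt D.tinvMul
    rw [h0, hdtt, hdtinvMul, phi_conv hHH]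
  have hΔσ' : Coalgebra.comul ∘ₗ D.sigmaEpsInv
      = TensorProduct.map D.sigmaEpsInv D.sigmaEpsInv ∘ₗ Coalgebra.comul := by
    simp only [TakData.sigmaEpsInv]
    have h0 : Coalgebra.comul ∘ₗ conv k D.tMul D.tinvtinv
        = conv k (Coalgebra.comul ∘ₗ D.tMul) (Coalgebra.comul ∘ₗ D.tinvtinv) :=
      algHom_comp_conv_s14 (Bialgebra.comulAlgHom k T) D.tMul D.tinvtinv
    rw [h0, hdtMul, hdtinvtinv, phi_conv hHH]
  -- counit compatibility
  have hεσ : Coalgebra.counit ∘ₗ D.sigmaEps = (Coalgebra.counit : H ⊗[k] H →ₗ[k] k) := by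
    simp only [TakData.sigmaEps]
    have h0 : Coalgebra.counit ∘ₗ conv k D.tt D.tinvMul
        = conv k (Coalgebra.counit ∘ₗ D.tt) (Coalgebra.counit ∘ₗ D.tinvMul) :=
      algHom_comp_conv_s14 (Bialgebra.counitAlgHom k T) D.tt D.tinvMul
    rw [h0, hett, hetinvMul, ← convOne_k_eq, conv_convOne]
  have hεσ' : Coalgebra.counit ∘ₗ D.sigmaEpsInv = (Coalgebra.counit : H ⊗[k] H →ₗ[k] k) := by
    simp only [TakData.sigmaEpsInv]
    have h0 : Coalgebra.counit ∘ₗ conv k D.tMul D.tinvtinv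
        = conv k (Coalgebra.counit ∘ₗ D.tMul) (Coalgebra.counit ∘ₗ D.tinvtinv) :=
      algHom_comp_conv_s14 (Bialgebra.counitAlgHom k T) D.tMul D.tinvtinv
    rw [h0, hetMul, hetinvtinv, ← convOne_k_eq, conv_convOne]
  -- σ and σ⁻¹ are mutually inverse for convolution
  have hσσ' : conv k D.sigmaEps D.sigmaEpsInv = convOne k := by
    simp only [TakData.sigmaEps, TakData.sigmaEpsInv]
    have h1 : conv k D.tinvMul D.tMul = convOne k := by
      simp only [TakData.tinvMul, TakData.tMul]
      rw [← conv_comp_coalgMap (LinearMap.mul' k H) comul_comp_mul'' D.tinv D.t,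
        D.conv_tinv_t, convOne_comp _ counit_comp_mul']
    have h2 : conv k D.tt D.tinvtinv = convOne k := by
      simp only [TakData.tt, TakData.tinvtinv]
      rw [conv_mul_mul, D.conv_t_tinv, mul'_comp_map_convOne_convOne]
    rw [conv_comm hHH D.tMul D.tinvtinv, conv_conv_conv_comm hHH, h1, h2, conv_convOne]
  have hσ'σ : conv k D.sigmaEpsInv D.sigmaEps = convOne k := by
    rw [conv_comm hHH]; exact hσσ'
  -- antipode identities
  have hSσ : HopfAlgebra.antipode (R := k) ∘ₗ D.sigmaEps = D.sigmaEpsInv :=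
    conv_eq_of_inv D.sigmaEps D.sigmaEpsInv _ hσσ' (conv_antipode_left D.sigmaEps hΔσ hεσ)
  have hSσ' : HopfAlgebra.antipode (R := k) ∘ₗ D.sigmaEpsInv = D.sigmaEps :=
    conv_eq_of_inv D.sigmaEpsInv D.sigmaEps _ hσ'σ (conv_antipode_left D.sigmaEpsInv hΔσ' hεσ')
  refine ⟨hΔσ, hΔσ', hSσ, hSσ', ?_, ?_⟩
  · -- stability of B under the antipode
    intro b hb
    refine Algebra.adjoin_induction ?_ ?_ ?_ ?_ hb
    · rintro x (⟨p, rfl⟩ | ⟨p, rfl⟩)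
      · rw [show HopfAlgebra.antipode (R := k) (D.sigmaEps (p.1 ⊗ₜ[k] p.2))
            = D.sigmaEpsInv (p.1 ⊗ₜ[k] p.2) from LinearMap.congr_fun hSσ _]
        exact Algebra.subset_adjoin (Or.inr ⟨p, rfl⟩)
      · rw [show HopfAlgebra.antipode (R := k) (D.sigmaEpsInv (p.1 ⊗ₜ[k] p.2))
            = D.sigmaEps (p.1 ⊗ₜ[k] p.2) from LinearMap.congr_fun hSσ' _]
        exact Algebra.subset_adjoin (Or.inl ⟨p, rfl⟩)
    · intro r
      rw [Algebra.algebraMap_eq_smul_one, map_smul, antipode_one']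
      exact Subalgebra.smul_mem _ (Subalgebra.one_mem _) r
    · intro x y _ _ hx hy
      rw [map_add]; exact add_mem hx hy
    · intro x y _ _ hx hy
      rw [antipode_mul]; exact mul_mem hx hy
  · -- stability of B under comultiplication
    intro b hb
    have hmemσ : ∀ u : H ⊗[k] H, D.sigmaEps u ∈ D.B := by
      intro u
      induction u using TensorProduct.induction_on with
      | zero => rw [map_zero]; exact Subalgebra.zero_mem _
      | tmul x y => exact Algebra.subset_adjoin (Or.inl ⟨(x, y), rfl⟩)
      | add u v hu hv => rw [map_add]; exact add_mem hu hv
    have hmemσ' : ∀ u : H ⊗[k] H, D.sigmaEpsInv u ∈ D.B := by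
      intro u
      induction u using TensorProduct.induction_on with
      | zero => rw [map_zero]; exact Subalgebra.zero_mem _
      | tmul x y => exact Algebra.subset_adjoin (Or.inr ⟨(x, y), rfl⟩)
      | add u v hu hv => rw [map_add]; exact add_mem hu hv
    set R : Subalgebra k (T ⊗[k] T) := (Algebra.TensorProduct.map D.B.val D.B.val).range with hR
    have htmul : ∀ x : T, x ∈ D.B → ∀ y : T, y ∈ D.B → x ⊗ₜ[k] y ∈ R := by
      intro x hx y hy
      exact ⟨(⟨x, hx⟩ : D.B) ⊗ₜ[k] (⟨y, hy⟩ : D.B), rfl⟩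
    have key : Coalgebra.comul (R := k) b ∈ R := by
      refine Algebra.adjoin_induction ?_ ?_ ?_ ?_ hb
      · rintro x (⟨p, rfl⟩ | ⟨p, rfl⟩)
        · rw [show Coalgebra.comul (R := k) (D.sigmaEps (p.1 ⊗ₜ[k] p.2))
              = TensorProduct.map D.sigmaEps D.sigmaEps
                  (Coalgebra.comul (p.1 ⊗ₜ[k] p.2)) from LinearMap.congr_fun hΔσ _]
          generalize Coalgebra.comul (R := k) (p.1 ⊗ₜ[k] p.2) = w
          induction w using TensorProduct.induction_on with
          | zero => rw [map_zero]; exact Subalgebra.zero_mem _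
          | tmul u v => exact htmul _ (hmemσ u) _ (hmemσ v)
          | add u v hu hv => rw [map_add]; exact add_mem hu hv
        · rw [show Coalgebra.comul (R := k) (D.sigmaEpsInv (p.1 ⊗ₜ[k] p.2))
              = TensorProduct.map D.sigmaEpsInv D.sigmaEpsInv
                  (Coalgebra.comul (p.1 ⊗ₜ[k] p.2)) from LinearMap.congr_fun hΔσ' _]
          generalize Coalgebra.comul (R := k) (p.1 ⊗ₜ[k] p.2) = w
          induction w using TensorProduct.induction_on with
          | zero => rw [map_zero]; exact Subalgebra.zero_mem _
          | tmul u v => exact htmul _ (hmemσ' u) _ (hmemσ' v)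
          | add u v hu hv => rw [map_add]; exact add_mem hu hv
      · intro r
        rw [show Coalgebra.comul (R := k) (algebraMap k T r)
            = algebraMap k (T ⊗[k] T) r from (Bialgebra.comulAlgHom k T).commutes r]
        exact Subalgebra.algebraMap_mem _ r
      · intro x y _ _ hx hy
        rw [map_add]; exact add_mem hx hy
      · intro x y _ _ hx hy
        rw [show Coalgebra.comul (R := k) (x * y)
            = Coalgebra.comul (R := k) x * Coalgebra.comul (R := k) y from
          map_mul (Bialgebra.comulAlgHom k T) x y]
        exact mul_mem hx hy
    obtain ⟨w, hw⟩ := key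
    exact ⟨w, hw⟩
end
end
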